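/- Let n ≥ 1 be a natural number, let R be a commutative ℚ-algebra, let e ∈ R, and let Σ, L be n × n matrices over R satisfying Σ·Σ = (1/(n+1)) • (e • Σ), Σ·L = L·Σ = (1/(n+1)) • (e • L), L·L = e • L, trace Σ = e, and trace L = −e. Then for every integer k ≥ 1, trace((Σ + L)^k) = ((n+2)·(1 − (n+2)^{k−1})/(n+1)^k) • e^k. -/

import Mathlib

/-- Auxiliary coefficient sequence. -/
def reinhardtB (q : ℚ) : ℕ → ℚ
  | 0 => 1
  | (j+1) => q ^ (j+1) + (1 + q) * reinhardtB q j

lemma reinhardtB_formula (n : ℕ) :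
    ∀ j : ℕ, (1 / ((n : ℚ) + 1)) ^ j - reinhardtB (1 / ((n : ℚ) + 1)) j
      = (((n : ℚ) + 2) * (1 - ((n : ℚ) + 2) ^ j)) / ((n : ℚ) + 1) ^ (j + 1) := by
  have hne : ((n : ℚ) + 1) ≠ 0 := by positivity
  intro j
  induction j with
  | zero => simp [reinhardtB]
  | succ j ih =>
      have hB : reinhardtB (1 / ((n : ℚ) + 1)) j
          = (1 / ((n : ℚ) + 1)) ^ j
            - (((n : ℚ) + 2) * (1 - ((n : ℚ) + 2) ^ j)) / ((n : ℚ) + 1) ^ (j + 1) := by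
        linarith [ih]
      rw [reinhardtB, hB]
      simp only [one_div_pow]
      field_simp
      ring

/-- the trace of `(Σ + L)^k` for matrices satisfying the
Reinhardt-domain curvature relations. -/
theorem trace_pow_add_of_reinhardt_relations (n : ℕ) (hn : 1 ≤ n)
    {R : Type*} [CommRing R] [Algebra ℚ R]
    (e : R) (Sg L : Matrix (Fin n) (Fin n) R)
    (hSS : Sg * Sg = (1 / ((n : ℚ) + 1)) • (e • Sg))
    (hSL : Sg * L = (1 / ((n : ℚ) + 1)) • (e • L))
    (hLS : L * Sg = (1 / ((n : ℚ) + 1)) • (e • L))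
    (hLL : L * L = e • L)
    (htrS : Matrix.trace Sg = e)
    (htrL : Matrix.trace L = -e) :
    ∀ k : ℕ, 1 ≤ k →
      Matrix.trace ((Sg + L) ^ k) =
        ((((n : ℚ) + 2) * (1 - ((n : ℚ) + 2) ^ (k - 1))) / ((n : ℚ) + 1) ^ k) •
          e ^ k := by
  set q : ℚ := 1 / ((n : ℚ) + 1) with hq
  have key : ∀ j : ℕ, (Sg + L) ^ (j + 1)
      = q ^ j • (e ^ j • Sg) + reinhardtB q j • (e ^ j • L) := by
    intro j
    induction j with
    | zero => simp [reinhardtB]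
    | succ j ih =>
        rw [pow_succ', ih]
        rw [mul_add, add_mul, add_mul, mul_smul_comm, mul_smul_comm,
          mul_smul_comm, mul_smul_comm, mul_smul_comm, mul_smul_comm,
          mul_smul_comm, mul_smul_comm, hSS, hSL, hLS, hLL, reinhardtB]
        simp only [smul_smul, smul_add, pow_succ]
        module
  intro k hk
  obtain ⟨j, rfl⟩ := Nat.exists_eq_add_of_le hk
  have h1 : 1 + j = j + 1 := by ring
  rw [h1, key j]
  simp only [Matrix.trace_add, Matrix.trace_smul, htrS, htrL, smul_neg,
    Nat.add_sub_cancel]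
  rw [← sub_eq_add_neg, ← sub_smul]
  have := reinhardtB_formula n j
  rw [← hq] at this
  rw [this, smul_eq_mul, ← pow_succ]
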